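/- Let K be a field and let f_1, …, f_r, g_1, …, g_n ∈ K[t_1, …, t_n]. Assume m = (g_1, …, g_n) is a maximal ideal of K[t_1, …, t_n] with residue field κ = K[t_1, …, t_n]/m, that each f_i lies in m, and that the n×n matrix G = (∂g_i/∂t_j mod m) over κ is invertible. Let R = K[t_1, …, t_n]/(f_1, …, f_r) and let m_x be the image of m in R, a maximal ideal of R. Fix polynomials h_{ij} with f_i = Σ_j h_{ij} g_j for all i, and let h̄_{ij} ∈ κ denote h_{ij} mod m. Then the dimension of the κ-vector space m_x/m_x² equals n minus the rank over κ of the r×n matrix (h̄_{ij}). -/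

import Mathlib

open Ideal MvPolynomial

private lemma cot_smul {R : Type*} [CommRing R] (m : Ideal R) (p : R) (a : m) :
    (Ideal.Quotient.mk m p) • m.toCotangent a
      = m.toCotangent ⟨p * (a : R), m.mul_mem_left p a.2⟩ := by
  have h1 : (Ideal.Quotient.mk m p) • m.toCotangent a = p • m.toCotangent a := rfl
  rw [h1, ← map_smul]
  congr 1

private lemma cot_sum_smul {R : Type*} [CommRing R] (m : Ideal R) {s : ℕ}
    (u : Fin s → R) (hu : ∀ i, u i ∈ m) (c : Fin s → R) (hx : ∑ i, c i * u i ∈ m) :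
    m.toCotangent ⟨∑ i, c i * u i, hx⟩
      = ∑ i, (Ideal.Quotient.mk m (c i)) • m.toCotangent ⟨u i, hu i⟩ := by
  simp_rw [cot_smul, ← map_sum]
  congr 1
  ext
  simp

set_option maxHeartbeats 1000000
set_option synthInstance.maxHeartbeats 400000

/-- Let `m = (g_1, …, g_n)` be a maximal ideal of `K[t_1, …, t_n]` with
residue field `κ`, suppose each `f_i ∈ m` and the matrix `(∂g_i/∂t_j mod m)` is invertible
over `κ`.  If `R = K[t]/(f_1, …, f_r)`, `m_x` is the image of `m` in `R`, and
`f_i = Σ_j h_{ij} g_j`, then `dim_κ (m_x / m_x²) = n - rank (h̄_{ij})`. -/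
theorem finrank_cotangent_eq {K : Type*} [Field K] {n r : ℕ}
    (f : Fin r → MvPolynomial (Fin n) K) (g : Fin n → MvPolynomial (Fin n) K)
    (m : Ideal (MvPolynomial (Fin n) K))
    (hm : m = Ideal.span (Set.range g))
    (hmax : m.IsMaximal)
    (hfm : ∀ i, f i ∈ m)
    (hGinv : IsUnit (Matrix.of fun i j : Fin n =>
      Ideal.Quotient.mk m (MvPolynomial.pderiv j (g i))))
    (h : Fin r → Fin n → MvPolynomial (Fin n) K)
    (hfh : ∀ i, f i = ∑ j, h i j * g j)
    (mx : Ideal (MvPolynomial (Fin n) K ⧸ Ideal.span (Set.range f)))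
    (hmx : mx = m.map (Ideal.Quotient.mk (Ideal.span (Set.range f)))) :
    Module.finrank ((MvPolynomial (Fin n) K ⧸ Ideal.span (Set.range f)) ⧸ mx) mx.Cotangent
      = n - Matrix.rank (Matrix.of fun i j => Ideal.Quotient.mk m (h i j)) := by
  classical
  haveI := hmax
  subst hmx
  set I : Ideal (MvPolynomial (Fin n) K) := Ideal.span (Set.range f) with hI
  letI : Field (MvPolynomial (Fin n) K ⧸ m) := Ideal.Quotient.field m
  have hIm : I ≤ m := by
    rw [hI, Ideal.span_le]; rintro _ ⟨i, rfl⟩; exact hfm i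
  have hgm : ∀ i, g i ∈ m := by
    intro i; rw [hm]; exact Ideal.subset_span ⟨i, rfl⟩
  set v : Fin n → m.Cotangent := fun i => m.toCotangent ⟨g i, hgm i⟩ with hv
  set w : Fin r → m.Cotangent := fun i => m.toCotangent ⟨f i, hfm i⟩ with hwdef
  -- derivatives of elements of m^2 lie in m
  have hd2 : ∀ x ∈ m ^ 2, ∀ k : Fin n, pderiv k x ∈ m := by
    intro x hx k
    rw [pow_two] at hx
    refine Submodule.mul_induction_on hx ?_ ?_
    · intro a ha b hb
      rw [pderiv_mul]
      exact add_mem (m.mul_mem_left _ hb) (m.mul_mem_right _ ha)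
    · intro a b ha hb
      simpa [map_add] using add_mem ha hb
  -- span of v is everything
  have hvtop : ⊤ ≤ Submodule.span (MvPolynomial (Fin n) K ⧸ m) (Set.range v) := by
    rintro x -
    obtain ⟨⟨a, ham⟩, rfl⟩ := m.toCotangent_surjective x
    have ha' : a ∈ Ideal.span (Set.range g) := hm ▸ ham
    obtain ⟨c, hc⟩ := Ideal.mem_span_range_iff_exists_fun.mp ha'
    have hmem : (∑ i, c i * g i) ∈ m := hc.symm ▸ ham
    have e1 : m.toCotangent ⟨a, ham⟩ = m.toCotangent ⟨∑ i, c i * g i, hmem⟩ := by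
      congr 1; exact Subtype.ext hc.symm
    rw [e1, cot_sum_smul m g hgm c hmem]
    exact Submodule.sum_mem _ fun i _ =>
      Submodule.smul_mem _ _ (Submodule.subset_span ⟨i, rfl⟩)
  -- linear independence of v
  have hvind : LinearIndependent (MvPolynomial (Fin n) K ⧸ m) v := by
    rw [Fintype.linearIndependent_iff]
    intro cc hcc
    choose p hp using fun i => Ideal.Quotient.mk_surjective (I := m) (cc i)
    have hmem : (∑ i, p i * g i) ∈ m := sum_mem fun i _ => m.mul_mem_left _ (hgm i)
    have h0 : (∑ i, p i * g i) ∈ m ^ 2 := by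
      refine (m.toCotangent_eq_zero ⟨_, hmem⟩).mp ?_
      rw [cot_sum_smul m g hgm p hmem]
      simp_rw [hp]
      exact hcc
    have hrow : ∀ k, ∑ j, cc j * (Ideal.Quotient.mk m (pderiv k (g j))) = 0 := by
      intro k
      have h1 : pderiv k (∑ i, p i * g i) ∈ m := hd2 _ h0 k
      have h2 : pderiv k (∑ i, p i * g i) - ∑ j, p j * pderiv k (g j)
          = ∑ j, pderiv k (p j) * g j := by
        rw [map_sum]
        simp_rw [pderiv_mul]
        rw [Finset.sum_add_distrib, add_sub_cancel_right]
      have h4 : (∑ j, pderiv k (p j) * g j) ∈ m :=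
        sum_mem fun j _ => m.mul_mem_left _ (hgm j)
      have h3 : (∑ j, p j * pderiv k (g j)) ∈ m := by
        have e2 : (∑ j, p j * pderiv k (g j))
            = pderiv k (∑ i, p i * g i) - ∑ j, pderiv k (p j) * g j := by
          rw [← h2, sub_sub_cancel]
        rw [e2]; exact m.sub_mem h1 h4
      have h5 := Ideal.Quotient.eq_zero_iff_mem.mpr h3
      rw [map_sum] at h5
      simp_rw [_root_.map_mul, hp] at h5
      exact h5
    have hvm : Matrix.vecMul cc (Matrix.of fun i j : Fin n =>
        Ideal.Quotient.mk m (pderiv j (g i))) = 0 := by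
      funext k
      simpa [Matrix.vecMul, dotProduct] using hrow k
    obtain ⟨U, hU⟩ := hGinv
    have hone : (Matrix.of fun i j : Fin n => Ideal.Quotient.mk m (pderiv j (g i)))
        * ((↑U⁻¹ : Matrix (Fin n) (Fin n) (MvPolynomial (Fin n) K ⧸ m))) = 1 := by
      rw [← hU]; exact U.mul_inv
    have hcc0 : cc = 0 := by
      have h6 : Matrix.vecMul (Matrix.vecMul cc (Matrix.of fun i j : Fin n =>
            Ideal.Quotient.mk m (pderiv j (g i))))
            ((↑U⁻¹ : Matrix (Fin n) (Fin n) (MvPolynomial (Fin n) K ⧸ m)))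
          = Matrix.vecMul 0 ((↑U⁻¹ : Matrix (Fin n) (Fin n) (MvPolynomial (Fin n) K ⧸ m))) := by
        rw [hvm]
      rw [Matrix.vecMul_vecMul, hone, Matrix.vecMul_one, Matrix.zero_vecMul] at h6
      exact h6
    exact fun i => congrFun hcc0 i
  -- basis
  let B : Module.Basis (Fin n) (MvPolynomial (Fin n) K ⧸ m) m.Cotangent := Module.Basis.mk hvind hvtop
  haveI : Module.Finite (MvPolynomial (Fin n) K ⧸ m) m.Cotangent := Module.Finite.of_basis B
  have hM : Module.finrank (MvPolynomial (Fin n) K ⧸ m) m.Cotangent = n := by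
    rw [Module.finrank_eq_card_basis B, Fintype.card_fin]
  -- rows of the matrix h̄
  set rows : Fin r → (Fin n → (MvPolynomial (Fin n) K ⧸ m)) := fun i j => Ideal.Quotient.mk m (h i j) with hrows
  have hw : ∀ i, w i = ∑ j, rows i j • v j := by
    intro i
    have hmem : (∑ j, h i j * g j) ∈ m := (hfh i) ▸ hfm i
    show m.toCotangent ⟨f i, hfm i⟩ = _
    have e1 : m.toCotangent ⟨f i, hfm i⟩ = m.toCotangent ⟨∑ j, h i j * g j, hmem⟩ := by
      congr 1
      exact Subtype.ext (hfh i)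
    rw [e1, cot_sum_smul m g hgm _ hmem]
  set W : Submodule (MvPolynomial (Fin n) K ⧸ m) m.Cotangent := Submodule.span (MvPolynomial (Fin n) K ⧸ m) (Set.range w) with hW
  have hwB : ∀ i, w i = B.equivFun.symm (rows i) := by
    intro i
    rw [Module.Basis.equivFun_symm_apply]
    simpa only [B, Module.Basis.mk_apply] using hw i
  have hWmap : W = (Submodule.span (MvPolynomial (Fin n) K ⧸ m) (Set.range rows)).map
      (B.equivFun.symm : (Fin n → (MvPolynomial (Fin n) K ⧸ m)) →ₗ[MvPolynomial (Fin n) K ⧸ m] m.Cotangent) := by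
    rw [hW, Submodule.map_span, ← Set.range_comp]
    congr 1
    exact congrArg _ (funext fun i => (hwB i))
  have hfrW : Module.finrank (MvPolynomial (Fin n) K ⧸ m) W
      = Module.finrank (MvPolynomial (Fin n) K ⧸ m) (Submodule.span (MvPolynomial (Fin n) K ⧸ m) (Set.range rows)) := by
    rw [hWmap, LinearEquiv.finrank_map_eq]
  have hrank : (Matrix.of fun i j => Ideal.Quotient.mk m (h i j)).rank
      = Module.finrank (MvPolynomial (Fin n) K ⧸ m) W := by
    rw [Matrix.rank_eq_finrank_span_row, hfrW]
    rfl
  have hq := Submodule.finrank_quotient_add_finrank W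
  rw [hM] at hq
  -- the map between the two cotangent spaces
  set mxI : Ideal (MvPolynomial (Fin n) K ⧸ I) := m.map (Ideal.Quotient.mk I) with hmxI
  have hle : m ≤ mxI.comap (Ideal.Quotient.mkₐ K I) := by
    intro x hx
    exact Ideal.mem_map_of_mem _ hx
  set Φ0 : m.Cotangent →ₗ[K] mxI.Cotangent :=
    Ideal.mapCotangent m mxI (Ideal.Quotient.mkₐ K I) hle with hΦ0
  set e : (MvPolynomial (Fin n) K ⧸ m) ≃+* ((MvPolynomial (Fin n) K ⧸ I) ⧸ mxI) := (DoubleQuot.quotQuotEquivQuotOfLE hIm).symm with he'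
  have he : ∀ p : MvPolynomial (Fin n) K, e (Ideal.Quotient.mk m p)
      = Ideal.Quotient.mk mxI (Ideal.Quotient.mk I p) := by
    intro p
    rw [he']
    exact DoubleQuot.quotQuotEquivQuotOfLE_symm_mk p hIm
  have hΦsmul : ∀ (p : MvPolynomial (Fin n) K) (x : m.Cotangent),
      Φ0 ((Ideal.Quotient.mk m p) • x)
        = (Ideal.Quotient.mk mxI (Ideal.Quotient.mk I p)) • Φ0 x := by
    intro p x
    obtain ⟨a, rfl⟩ := m.toCotangent_surjective x
    rw [cot_smul, hΦ0, Ideal.mapCotangent_toCotangent, Ideal.mapCotangent_toCotangent,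
      cot_smul]
    congr 1
  have hΦsurj : Function.Surjective Φ0 := by
    intro y
    obtain ⟨⟨z, hz⟩, rfl⟩ := mxI.toCotangent_surjective y
    obtain ⟨x, hxm, rfl⟩ :=
      (Ideal.mem_map_iff_of_surjective _ Ideal.Quotient.mk_surjective).mp hz
    refine ⟨m.toCotangent ⟨x, hxm⟩, ?_⟩
    rw [hΦ0, Ideal.mapCotangent_toCotangent]
    rfl
  have hker : ∀ x : m.Cotangent, Φ0 x = 0 → x ∈ W := by
    intro x hx
    obtain ⟨⟨a, ham⟩, rfl⟩ := m.toCotangent_surjective x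
    rw [hΦ0, Ideal.mapCotangent_toCotangent, Ideal.toCotangent_eq_zero, ← Ideal.map_pow] at hx
    obtain ⟨b, hb, hba⟩ :=
      (Ideal.mem_map_iff_of_surjective _ Ideal.Quotient.mk_surjective).mp hx
    have hab : a - b ∈ I := by
      rw [← Ideal.Quotient.eq]
      simpa [Ideal.Quotient.mkₐ_eq_mk] using hba.symm
    have hbm : b ∈ m := Ideal.pow_le_self two_ne_zero hb
    have e1 : m.toCotangent ⟨a, ham⟩ = m.toCotangent ⟨a - b, m.sub_mem ham hbm⟩ := by
      rw [Ideal.toCotangent_eq]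
      show a - (a - b) ∈ m ^ 2
      rw [sub_sub_cancel]
      exact hb
    rw [e1]
    obtain ⟨c, hc⟩ := Ideal.mem_span_range_iff_exists_fun.mp hab
    have hmem : (∑ i, c i * f i) ∈ m := hc.symm ▸ (m.sub_mem ham hbm)
    have e2 : m.toCotangent ⟨a - b, m.sub_mem ham hbm⟩
        = m.toCotangent ⟨∑ i, c i * f i, hmem⟩ := by
      congr 1; exact Subtype.ext hc.symm
    rw [e2, cot_sum_smul m f hfm c hmem]
    exact Submodule.sum_mem _ fun i _ =>
      Submodule.smul_mem _ _ (Submodule.subset_span ⟨i, rfl⟩)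
  letI modinst : Module (MvPolynomial (Fin n) K ⧸ m) mxI.Cotangent :=
    Module.compHom _ (e : (MvPolynomial (Fin n) K ⧸ m) →+* ((MvPolynomial (Fin n) K ⧸ I) ⧸ mxI))
  have hsmul' : ∀ (c : MvPolynomial (Fin n) K ⧸ m) (x : mxI.Cotangent), c • x = e c • x := fun _ _ => rfl
  let Φ : m.Cotangent →ₗ[MvPolynomial (Fin n) K ⧸ m] mxI.Cotangent :=
    { toFun := Φ0
      map_add' := map_add Φ0
      map_smul' := by
        intro c x
        obtain ⟨p, rfl⟩ := Ideal.Quotient.mk_surjective c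
        show Φ0 (Ideal.Quotient.mk m p • x) = e (Ideal.Quotient.mk m p) • Φ0 x
        rw [he, hΦsmul p x] }
  have hkerΦ : LinearMap.ker Φ = W := by
    refine le_antisymm (fun x hx => hker x hx) ?_
    rw [hW, Submodule.span_le]
    rintro _ ⟨i, rfl⟩
    show Φ0 (m.toCotangent ⟨f i, hfm i⟩) = 0
    rw [hΦ0, Ideal.mapCotangent_toCotangent, Ideal.toCotangent_eq_zero]
    have : Ideal.Quotient.mk I (f i) = 0 :=
      Ideal.Quotient.eq_zero_iff_mem.mpr (Ideal.subset_span ⟨i, rfl⟩)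
    simp [Ideal.Quotient.mkₐ_eq_mk, this]
  let j : (m.Cotangent ⧸ W) ≃ₗ[MvPolynomial (Fin n) K ⧸ m] mxI.Cotangent :=
    (Submodule.quotEquivOfEq W (LinearMap.ker Φ) hkerΦ.symm).trans
      (Φ.quotKerEquivOfSurjective hΦsurj)
  have hrk : Module.rank (MvPolynomial (Fin n) K ⧸ m) (m.Cotangent ⧸ W)
      = Module.rank ((MvPolynomial (Fin n) K ⧸ I) ⧸ mxI) mxI.Cotangent := by
    refine rank_eq_of_equiv_equiv (R := MvPolynomial (Fin n) K ⧸ m) (R' := (MvPolynomial (Fin n) K ⧸ I) ⧸ mxI)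
      e j.toAddEquiv e.bijective ?_
    intro c x
    show j (c • x) = e c • j x
    rw [map_smul]
    exact hsmul' c (j x)
  have hfin : Module.finrank ((MvPolynomial (Fin n) K ⧸ I) ⧸ mxI) mxI.Cotangent
      = Module.finrank (MvPolynomial (Fin n) K ⧸ m) (m.Cotangent ⧸ W) :=
    (congrArg Cardinal.toNat hrk).symm
  rw [hfin, hrank]
  omega
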